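/- For every k ≥ 0 and every x ∈ Cl^p(Q) ⊗ Λ^q(W), the k-th power of the operator E satisfies E^k(x) = (Π^{p+k} ⊗ id)(θ^k · x) = (−1)^{k(p+q)} (Π^{p+k} ⊗ id)(x · θ^k). -/

import Mathlib

open CliffordAlgebra
open scoped TensorProduct

/-- The linear map `φ : Λ(V) → Cl(Q)`, `φ(x) = ρL(x)(1)`. -/
noncomputable def cliffordPhi
    {K : Type*} [Field K] {V : Type*} [AddCommGroup V] [Module K V]
    {Q : QuadraticForm K V}
    (ρL : ExteriorAlgebra K V →ₐ[K] Module.End K (CliffordAlgebra Q)) :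
    ExteriorAlgebra K V →ₗ[K] CliffordAlgebra Q :=
  (LinearMap.applyₗ (1 : CliffordAlgebra Q)).comp ρL.toLinearMap

/-- The component `Cl^j(Q) := φ(Λ^j(V))` of the Clifford algebra. -/
noncomputable def cliffordComponent
    {K : Type*} [Field K] {V : Type*} [AddCommGroup V] [Module K V]
    {Q : QuadraticForm K V}
    (ρL : ExteriorAlgebra K V →ₐ[K] Module.End K (CliffordAlgebra Q)) (j : ℕ) :
    Submodule K (CliffordAlgebra Q) :=
  Submodule.map (cliffordPhi ρL)
    (LinearMap.range (ExteriorAlgebra.ι K : V →ₗ[K] ExteriorAlgebra K V) ^ j)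

/-- The component `A^{pq} = Cl^p(Q) ⊗ Λ^q(W)` of the tensor-product algebra
`A = Cl(Q) ⊗ Λ(W)`. -/
noncomputable def cliffordFormComponent
    {K : Type*} [Field K] {V : Type*} [AddCommGroup V] [Module K V]
    {W : Type*} [AddCommGroup W] [Module K W] {Q : QuadraticForm K V}
    (ρL : ExteriorAlgebra K V →ₐ[K] Module.End K (CliffordAlgebra Q)) (p q : ℕ) :
    Submodule K (CliffordAlgebra Q ⊗[K] ExteriorAlgebra K W) :=
  Submodule.span K
    {z | ∃ a ∈ cliffordComponent ρL p,
      ∃ α ∈ LinearMap.range (ExteriorAlgebra.ι K : W →ₗ[K] ExteriorAlgebra K W) ^ q,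
        z = a ⊗ₜ[K] α}

set_option linter.unusedSectionVars false

section CFE
variable {K : Type*} [Field K] {V : Type*} [AddCommGroup V] [Module K V]
  {Q : QuadraticForm K V}

/-- twice the "raising" operator -/
noncomputable def cfeA (j : ℕ) (v : V) (b : CliffordAlgebra Q) : CliffordAlgebra Q :=
  ι Q v * b + (-1 : K) ^ j • (b * ι Q v)

/-- twice the "lowering" operator -/
noncomputable def cfeB (j : ℕ) (v : V) (b : CliffordAlgebra Q) : CliffordAlgebra Q :=
  ι Q v * b - (-1 : K) ^ j • (b * ι Q v)

lemma cfeA_add (j : ℕ) (v : V) (b c : CliffordAlgebra Q) :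
    cfeA j v (b + c) = cfeA j v b + cfeA j v c := by
  simp only [cfeA, mul_add, add_mul, smul_add]; abel

lemma cfeB_add (j : ℕ) (v : V) (b c : CliffordAlgebra Q) :
    cfeB j v (b + c) = cfeB j v b + cfeB j v c := by
  simp only [cfeB, mul_add, add_mul, smul_add]; abel

lemma cfeA_smul (j : ℕ) (v : V) (c : K) (b : CliffordAlgebra Q) :
    cfeA j v (c • b) = c • cfeA j v b := by
  simp only [cfeA, mul_smul_comm, smul_mul_assoc, smul_add, smul_comm c]

lemma cfeB_smul (j : ℕ) (v : V) (c : K) (b : CliffordAlgebra Q) :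
    cfeB j v (c • b) = c • cfeB j v b := by
  simp only [cfeB, mul_smul_comm, smul_mul_assoc, smul_sub, smul_comm c]

lemma cfeAB (j : ℕ) (v w : V) (b : CliffordAlgebra Q) :
    cfeB (j+1) v (cfeA j w b) + cfeA (j+1) w (cfeB j v b)
      = (ι Q v * ι Q w + ι Q w * ι Q v) * b + b * (ι Q v * ι Q w + ι Q w * ι Q v) := by
  rcases Nat.even_or_odd j with h | h
  · simp only [cfeA, cfeB, h.neg_one_pow, (h.add_one).neg_one_pow, one_smul, neg_one_smul]
    noncomm_ring
  · simp only [cfeA, cfeB, h.neg_one_pow, (Odd.add_one h).neg_one_pow, one_smul, neg_one_smul]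
    noncomm_ring

lemma cfeAB' (j : ℕ) (v w : V) (b : CliffordAlgebra Q) :
    cfeB (j+1) v (cfeA j w b)
      = QuadraticMap.polar Q v w • b + QuadraticMap.polar Q v w • b
        - cfeA (j+1) w (cfeB j v b) := by
  rw [eq_sub_iff_add_eq, cfeAB, ι_mul_ι_add_swap]
  simp only [Algebra.smul_def, Algebra.commutes]

lemma cfeA_add_cfeB [CharZero K] (j : ℕ) (v : V) (b : CliffordAlgebra Q) :
    (2 : K)⁻¹ • cfeA j v b + (2 : K)⁻¹ • cfeB j v b = ι Q v * b := by
  rw [← smul_add, cfeA, cfeB, add_add_sub_cancel, ← two_smul K, smul_smul,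
    inv_mul_cancel₀ (two_ne_zero : (2:K) ≠ 0), one_smul]

lemma cfeA_sub_cfeB [CharZero K] (j : ℕ) (v : V) (b : CliffordAlgebra Q) :
    (-1 : K) ^ j • ((2 : K)⁻¹ • cfeA j v b - (2 : K)⁻¹ • cfeB j v b) = b * ι Q v := by
  have h2 : ((-1:K)^j) * ((-1:K)^j) = 1 := by
    rw [← pow_add]; exact Even.neg_one_pow ⟨j, rfl⟩
  rw [← smul_sub, cfeA, cfeB, add_sub_sub_cancel, ← two_smul K, smul_smul, smul_smul, smul_smul]
  match_scalars
  linear_combination h2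

end CFE

section Comp
variable {K : Type*} [Field K] [CharZero K] {V : Type*} [AddCommGroup V] [Module K V]
  {Q : QuadraticForm K V}
  (ρL : ExteriorAlgebra K V →ₐ[K] Module.End K (CliffordAlgebra Q))

lemma cfePhi_one : cliffordPhi ρL 1 = 1 := by
  simp [cliffordPhi]

lemma cfePhi_mul (x y : ExteriorAlgebra K V) :
    cliffordPhi ρL (x * y) = ρL x (cliffordPhi ρL y) := by
  simp [cliffordPhi, map_mul, Module.End.mul_apply]

lemma cfe_mem_comp_zero {a : CliffordAlgebra Q} (ha : a ∈ cliffordComponent ρL 0) :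
    ∃ c : K, a = c • 1 := by
  obtain ⟨ω, hω, rfl⟩ := ha
  rw [pow_zero] at hω
  obtain ⟨c, rfl⟩ := Submodule.mem_one.mp hω
  exact ⟨c, by rw [Algebra.algebraMap_eq_smul_one, map_smul, cfePhi_one]⟩

lemma cfe_smul_one_mem_comp_zero (c : K) : (c • 1 : CliffordAlgebra Q) ∈ cliffordComponent ρL 0 := by
  refine ⟨algebraMap K _ c, ?_, ?_⟩
  · rw [pow_zero]
    exact Submodule.mem_one.mpr ⟨c, rfl⟩
  · rw [Algebra.algebraMap_eq_smul_one, map_smul, cfePhi_one]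

variable (L : V →ₗ[K] Module.End K (CliffordAlgebra Q))
  (hL : ∀ (v : V) (i : ZMod 2) (a : CliffordAlgebra Q), a ∈ evenOdd Q i →
      L v a = (2 : K)⁻¹ • (ι Q v * a + (-1 : CliffordAlgebra Q) ^ i.val * (a * ι Q v)))
  (hρL : ∀ v : V, ρL (ExteriorAlgebra.ι K v) = L v)

include hρL in
lemma cfePhi_iota_mul (v : V) (ω : ExteriorAlgebra K V) :
    cliffordPhi ρL (ExteriorAlgebra.ι K v * ω) = L v (cliffordPhi ρL ω) := by
  rw [cfePhi_mul, hρL]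

lemma cfe_neg_one_pow_val_mul (j : ℕ) (c : CliffordAlgebra Q) :
    (-1 : CliffordAlgebra Q) ^ ((j : ZMod 2)).val * c = (-1 : K) ^ j • c := by
  rw [ZMod.val_natCast]
  rcases Nat.even_or_odd j with h | h
  · rw [Nat.even_iff.mp h, pow_zero, one_mul, h.neg_one_pow, one_smul]
  · rw [Nat.odd_iff.mp h, pow_one, neg_one_mul, h.neg_one_pow, neg_one_smul]

include hL hρL in
lemma cfe_comp_mem_evenOdd (j : ℕ) :
    ∀ a ∈ cliffordComponent ρL j, a ∈ evenOdd Q (j : ZMod 2) := by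
  induction j with
  | zero =>
    intro a ha
    obtain ⟨c, rfl⟩ := cfe_mem_comp_zero ρL ha
    exact Submodule.smul_mem _ _ (by exact_mod_cast SetLike.one_mem_graded (evenOdd Q))
  | succ j ih =>
    rintro _ ⟨ω, hω, rfl⟩
    rw [pow_succ'] at hω
    refine Submodule.mul_induction_on
      (C := fun r => cliffordPhi ρL r ∈ evenOdd Q (((j+1 : ℕ)) : ZMod 2)) hω ?_ ?_
    · rintro m ⟨v, rfl⟩ x hx
      rw [cfePhi_iota_mul ρL L hρL]
      have hx' : cliffordPhi ρL x ∈ evenOdd Q (j : ZMod 2) := ih _ ⟨x, hx, rfl⟩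
      rw [hL v _ _ hx', cfe_neg_one_pow_val_mul]
      refine Submodule.smul_mem _ _ (Submodule.add_mem _ ?_ (Submodule.smul_mem _ _ ?_))
      · have := SetLike.mul_mem_graded (ι_mem_evenOdd_one Q v) hx'
        convert this using 2
        push_cast
        ring
      · have := SetLike.mul_mem_graded hx' (ι_mem_evenOdd_one Q v)
        convert this using 2
        push_cast
        ring
    · intro x y h1 h2
      rw [map_add]
      exact Submodule.add_mem _ h1 h2

include hL hρL in
lemma cfe_L_eq (j : ℕ) (v : V) {a : CliffordAlgebra Q} (ha : a ∈ cliffordComponent ρL j) :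
    L v a = (2 : K)⁻¹ • cfeA j v a := by
  rw [hL v _ _ (cfe_comp_mem_evenOdd ρL L hL hρL j a ha), cfe_neg_one_pow_val_mul, cfeA]

include hL hρL in
lemma cfeA_mem (j : ℕ) (v : V) {a : CliffordAlgebra Q} (ha : a ∈ cliffordComponent ρL j) :
    cfeA j v a ∈ cliffordComponent ρL (j + 1) := by
  obtain ⟨ω, hω, rfl⟩ := ha
  have h1 : cliffordPhi ρL (ExteriorAlgebra.ι K v * ω) ∈ cliffordComponent ρL (j + 1) := by
    refine ⟨_, ?_, rfl⟩
    rw [pow_succ']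
    exact Submodule.mul_mem_mul (LinearMap.mem_range_self _ v) hω
  rw [cfePhi_iota_mul ρL L hρL, cfe_L_eq ρL L hL hρL j v ⟨ω, hω, rfl⟩] at h1
  have := Submodule.smul_mem _ (2 : K) h1
  rwa [smul_smul, mul_inv_cancel₀ (two_ne_zero : (2:K) ≠ 0), one_smul] at this

lemma cfeB_zero {a : CliffordAlgebra Q} (ha : a ∈ cliffordComponent ρL 0) (v : V) :
    cfeB 0 v a = 0 := by
  obtain ⟨c, rfl⟩ := cfe_mem_comp_zero ρL ha
  simp [cfeB, mul_smul_comm, smul_mul_assoc]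

include hL hρL in
lemma cfeB_mem (j : ℕ) (v : V) {a : CliffordAlgebra Q} (ha : a ∈ cliffordComponent ρL j) :
    cfeB j v a ∈ cliffordComponent ρL (j - 1) := by
  induction j generalizing a v with
  | zero => rw [cfeB_zero ρL ha v]; exact Submodule.zero_mem _
  | succ j ih =>
    obtain ⟨ω, hω, rfl⟩ := ha
    rw [pow_succ'] at hω
    refine Submodule.mul_induction_on
      (C := fun r => cfeB (j+1) v (cliffordPhi ρL r) ∈ cliffordComponent ρL (j + 1 - 1)) hω ?_ ?_
    · rintro m ⟨w, rfl⟩ x hx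
      have hx' : cliffordPhi ρL x ∈ cliffordComponent ρL j := ⟨x, hx, rfl⟩
      rw [cfePhi_iota_mul ρL L hρL, cfe_L_eq ρL L hL hρL j w hx', cfeB_smul, cfeAB']
      have hmem : cfeA (j+1) w (cfeB j v (cliffordPhi ρL x)) ∈ cliffordComponent ρL j := by
        match j, hx' with
        | 0, hx' => rw [cfeB_zero ρL hx' v]; simp [cfeA]
        | (j'+1), hx' =>
          have hB := ih v hx'
          have : cfeA (j'+1+1) w (cfeB (j'+1) v (cliffordPhi ρL x))
              = cfeA j' w (cfeB (j'+1) v (cliffordPhi ρL x)) := by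
            unfold cfeA
            congr 2
            rw [pow_succ, pow_succ]
            ring
          rw [this]
          exact cfeA_mem ρL L hL hρL j' w hB
      simp only [Nat.add_sub_cancel]
      refine Submodule.smul_mem _ _ (Submodule.sub_mem _ ?_ hmem)
      exact Submodule.add_mem _ (Submodule.smul_mem _ _ hx') (Submodule.smul_mem _ _ hx')
    · intro x y h1 h2
      rw [map_add, cfeB_add]
      exact Submodule.add_mem _ h1 h2

end Comp

section Ext
variable {K : Type*} [Field K] {W : Type*} [AddCommGroup W] [Module K W]

lemma cfe_ext_comm (m : ℕ) {α : ExteriorAlgebra K W}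
    (hα : α ∈ (LinearMap.range (ExteriorAlgebra.ι K : W →ₗ[K] ExteriorAlgebra K W)) ^ m)
    (w : W) :
    α * ExteriorAlgebra.ι K w = (-1:K)^m • (ExteriorAlgebra.ι K w * α) := by
  induction m generalizing α with
  | zero =>
    rw [pow_zero] at hα
    obtain ⟨c, rfl⟩ := Submodule.mem_one.mp hα
    rw [pow_zero, one_smul, Algebra.commutes]
  | succ m ih =>
    rw [pow_succ'] at hα
    refine Submodule.mul_induction_on
      (C := fun r => r * ExteriorAlgebra.ι K w
        = (-1:K)^(m+1) • (ExteriorAlgebra.ι K w * r)) hα ?_ ?_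
    · rintro _ ⟨u, rfl⟩ β hβ
      have h1 : ExteriorAlgebra.ι K w * ExteriorAlgebra.ι K u
          = -(ExteriorAlgebra.ι K u * ExteriorAlgebra.ι K w) :=
        eq_neg_of_add_eq_zero_left (by rw [add_comm]; exact ExteriorAlgebra.ι_add_mul_swap u w)
      rw [mul_assoc, ih hβ, mul_smul_comm, ← mul_assoc, ← mul_assoc, h1, pow_succ]
      simp [smul_smul, neg_mul, mul_neg, smul_neg, mul_assoc]
    · intro x y h1 h2
      rw [add_mul, h1, h2, mul_add, smul_add]

lemma cfe_iota_mul_mem (m : ℕ) {α : ExteriorAlgebra K W}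
    (hα : α ∈ (LinearMap.range (ExteriorAlgebra.ι K : W →ₗ[K] ExteriorAlgebra K W)) ^ m)
    (w : W) :
    ExteriorAlgebra.ι K w * α
      ∈ (LinearMap.range (ExteriorAlgebra.ι K : W →ₗ[K] ExteriorAlgebra K W)) ^ (m+1) := by
  rw [pow_succ']
  exact Submodule.mul_mem_mul (LinearMap.mem_range_self _ w) hα

end Ext

section Tensor
variable {K : Type*} [Field K] [CharZero K] {V : Type*} [AddCommGroup V] [Module K V]
  {W : Type*} [AddCommGroup W] [Module K W] {Q : QuadraticForm K V}
  (ρL : ExteriorAlgebra K V →ₐ[K] Module.End K (CliffordAlgebra Q))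

omit [CharZero K] in
lemma cfe_rTensor_comp (Pi : ℕ → Module.End K (CliffordAlgebra Q))
    (hPi : ∀ (i j : ℕ) (a : CliffordAlgebra Q), a ∈ cliffordComponent ρL j →
      Pi i a = if i = j then a else 0)
    (i j m : ℕ) {z : CliffordAlgebra Q ⊗[K] ExteriorAlgebra K W}
    (hz : z ∈ cliffordFormComponent (W := W) ρL j m) :
    LinearMap.rTensor (ExteriorAlgebra K W) (Pi i) z = if i = j then z else 0 := by
  induction hz using Submodule.span_induction with
  | mem z hz =>
    obtain ⟨a, ha, α, hα, rfl⟩ := hz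
    rw [LinearMap.rTensor_tmul, hPi i j a ha]
    split <;> simp
  | zero => simp
  | add x y _ _ h1 h2 => rw [map_add, h1, h2]; split <;> simp
  | smul c x _ h => rw [map_smul, h]; split <;> simp

variable (n : ℕ) (bV : Module.Basis (Fin n) K V) (bW : Module.Basis (Fin n) K W)
  (L : V →ₗ[K] Module.End K (CliffordAlgebra Q))
  (hL : ∀ (v : V) (i : ZMod 2) (a : CliffordAlgebra Q), a ∈ evenOdd Q i →
      L v a = (2 : K)⁻¹ • (ι Q v * a + (-1 : CliffordAlgebra Q) ^ i.val * (a * ι Q v)))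
  (hρL : ∀ v : V, ρL (ExteriorAlgebra.ι K v) = L v)
  (θ : CliffordAlgebra Q ⊗[K] ExteriorAlgebra K W)
  (hθ : θ = ∑ i : Fin n, ι Q (bV i) ⊗ₜ[K] ExteriorAlgebra.ι K (bW i))

include hL hρL hθ in
lemma cfe_step (j m : ℕ) {y : CliffordAlgebra Q ⊗[K] ExteriorAlgebra K W}
    (hy : y ∈ cliffordFormComponent (W := W) ρL j m) :
    ∃ u ∈ cliffordFormComponent (W := W) ρL (j+1) (m+1),
      ∃ z ∈ cliffordFormComponent (W := W) ρL (j-1) (m+1),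
        θ * y = u + z ∧ y * θ = (-1:K)^(j+m) • (u - z) := by
  induction hy using Submodule.span_induction with
  | mem y hy =>
    obtain ⟨a, ha, α, hα, rfl⟩ := hy
    refine ⟨∑ i : Fin n, ((2:K)⁻¹ • cfeA j (bV i) a) ⊗ₜ[K] (ExteriorAlgebra.ι K (bW i) * α),
      ?_,
      ∑ i : Fin n, ((2:K)⁻¹ • cfeB j (bV i) a) ⊗ₜ[K] (ExteriorAlgebra.ι K (bW i) * α),
      ?_, ?_, ?_⟩
    · refine Submodule.sum_mem _ fun i _ => Submodule.subset_span
        ⟨_, Submodule.smul_mem _ _ (cfeA_mem ρL L hL hρL j (bV i) ha),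
         _, cfe_iota_mul_mem m hα (bW i), rfl⟩
    · refine Submodule.sum_mem _ fun i _ => Submodule.subset_span
        ⟨_, Submodule.smul_mem _ _ (cfeB_mem ρL L hL hρL j (bV i) ha),
         _, cfe_iota_mul_mem m hα (bW i), rfl⟩
    · rw [hθ, Finset.sum_mul, ← Finset.sum_add_distrib]
      refine Finset.sum_congr rfl fun i _ => ?_
      rw [Algebra.TensorProduct.tmul_mul_tmul, ← TensorProduct.add_tmul, cfeA_add_cfeB]
    · rw [hθ, Finset.mul_sum, ← Finset.sum_sub_distrib, Finset.smul_sum]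
      refine Finset.sum_congr rfl fun i _ => ?_
      rw [Algebra.TensorProduct.tmul_mul_tmul, ← cfeA_sub_cfeB j (bV i) a,
        cfe_ext_comm m hα (bW i), ← TensorProduct.sub_tmul, TensorProduct.tmul_smul, ← TensorProduct.smul_tmul', smul_smul,
        ← pow_add, add_comm m j]
  | zero => exact ⟨0, Submodule.zero_mem _, 0, Submodule.zero_mem _, by simp, by simp⟩
  | add x y hx hy h1 h2 =>
    obtain ⟨u1, hu1, z1, hz1, e1, e1'⟩ := h1
    obtain ⟨u2, hu2, z2, hz2, e2, e2'⟩ := h2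
    refine ⟨u1 + u2, Submodule.add_mem _ hu1 hu2, z1 + z2, Submodule.add_mem _ hz1 hz2, ?_, ?_⟩
    · rw [mul_add, e1, e2]; abel
    · rw [add_mul, e1', e2', ← smul_add]
      congr 1
      abel
  | smul c x hx h =>
    obtain ⟨u, hu, z, hz, e, e'⟩ := h
    refine ⟨c • u, Submodule.smul_mem _ _ hu, c • z, Submodule.smul_mem _ _ hz, ?_, ?_⟩
    · rw [mul_smul_comm, e, smul_add]
    · rw [smul_mul_assoc, e', ← smul_sub, smul_comm]

end Tensor


/-- For every `k ≥ 0` and every `x ∈ Cl^p(Q) ⊗ Λ^q(W)`, the `k`-th power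
of the operator `E` satisfies
`E^k(x) = (Π^{p+k} ⊗ id)(θ^k · x) = (−1)^{k(p+q)} (Π^{p+k} ⊗ id)(x · θ^k)`. -/
theorem clifford_form_E_power
    {K : Type*} [Field K] [CharZero K]
    {V : Type*} [AddCommGroup V] [Module K V]
    {W : Type*} [AddCommGroup W] [Module K W]
    (n : ℕ) (bV : Module.Basis (Fin n) K V) (bW : Module.Basis (Fin n) K W)
    (Q : QuadraticForm K V)
    (L : V →ₗ[K] Module.End K (CliffordAlgebra Q))
    (hL : ∀ (v : V) (i : ZMod 2) (a : CliffordAlgebra Q), a ∈ evenOdd Q i →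
      L v a = (2 : K)⁻¹ • (ι Q v * a + (-1 : CliffordAlgebra Q) ^ i.val * (a * ι Q v)))
    (ρL : ExteriorAlgebra K V →ₐ[K] Module.End K (CliffordAlgebra Q))
    (hρL : ∀ v : V, ρL (ExteriorAlgebra.ι K v) = L v)
    -- the projections `Π^i : Cl(Q) → Cl^i(Q)`
    (Pi : ℕ → Module.End K (CliffordAlgebra Q))
    (hPi : ∀ (i j : ℕ) (a : CliffordAlgebra Q), a ∈ cliffordComponent ρL j →
      Pi i a = if i = j then a else 0)
    -- `θ = Σ_i ι(v_i) ⊗ ι_Λ(w_i)`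
    (θ : CliffordAlgebra Q ⊗[K] ExteriorAlgebra K W)
    (hθ : θ = ∑ i : Fin n, ι Q (bV i) ⊗ₜ[K] ExteriorAlgebra.ι K (bW i))
    -- the operator `E`, acting on `A^{pq}` by `E(x) = (1/2)(θx + (−1)^{p+q} xθ)`
    (E : Module.End K (CliffordAlgebra Q ⊗[K] ExteriorAlgebra K W))
    (hE : ∀ (p q : ℕ) (x : CliffordAlgebra Q ⊗[K] ExteriorAlgebra K W),
      x ∈ cliffordFormComponent (W := W) ρL p q →
      E x = (2 : K)⁻¹ • (θ * x + (-1 : K) ^ (p + q) • (x * θ)))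
    (k p q : ℕ) (x : CliffordAlgebra Q ⊗[K] ExteriorAlgebra K W)
    (hx : x ∈ cliffordFormComponent (W := W) ρL p q) :
    (E ^ k) x = LinearMap.rTensor (ExteriorAlgebra K W) (Pi (p + k)) (θ ^ k * x) ∧
    (E ^ k) x =
      (-1 : K) ^ (k * (p + q)) •
        LinearMap.rTensor (ExteriorAlgebra K W) (Pi (p + k)) (x * θ ^ k) := by
  set S : ℕ → Submodule K (CliffordAlgebra Q ⊗[K] ExteriorAlgebra K W) := fun k =>
    ⨆ (jj : {j : ℕ // j < p + k}), cliffordFormComponent (W := W) ρL jj.1 (q + k) with hS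
  have hSmul : ∀ (k : ℕ) (r), r ∈ S k → θ * r ∈ S (k+1) ∧ r * θ ∈ S (k+1) := by
    intro k r hr
    refine Submodule.iSup_induction _ (motive := fun r => θ * r ∈ S (k+1) ∧ r * θ ∈ S (k+1))
      hr ?_ ?_ ?_
    · rintro ⟨j, hj⟩ w hw
      obtain ⟨u, hu, z, hz, e, e'⟩ := cfe_step (ρL := ρL) (n := n) (bV := bV) (bW := bW) (L := L)
        (hL := hL) (hρL := hρL) (θ := θ) (hθ := hθ) j (q+k) hw
      have hu' : u ∈ S (k+1) := Submodule.mem_iSup_of_mem ⟨j+1, by omega⟩ hu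
      have hz' : z ∈ S (k+1) := Submodule.mem_iSup_of_mem ⟨j-1, by omega⟩ hz
      exact ⟨by rw [e]; exact add_mem hu' hz',
        by rw [e']; exact Submodule.smul_mem _ _ (sub_mem hu' hz')⟩
    · exact ⟨by rw [mul_zero]; exact Submodule.zero_mem _,
        by rw [zero_mul]; exact Submodule.zero_mem _⟩
    · rintro a b ⟨h1, h2⟩ ⟨h3, h4⟩
      exact ⟨by rw [mul_add]; exact add_mem h1 h3, by rw [add_mul]; exact add_mem h2 h4⟩
  have hSPi : ∀ (k : ℕ) (r), r ∈ S k →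
      LinearMap.rTensor (ExteriorAlgebra K W) (Pi (p+k)) r = 0 := by
    intro k r hr
    refine Submodule.iSup_induction _
      (motive := fun r => LinearMap.rTensor (ExteriorAlgebra K W) (Pi (p+k)) r = 0)
      hr ?_ (map_zero _) ?_
    · rintro ⟨j, hj⟩ w hw
      rw [cfe_rTensor_comp ρL Pi hPi (p+k) j (q+k) hw, if_neg (by omega)]
    · intro a b h1 h2
      rw [map_add, h1, h2, add_zero]
  have main : ∀ k : ℕ, (E^k) x ∈ cliffordFormComponent (W := W) ρL (p+k) (q+k)
      ∧ θ^k * x - (E^k) x ∈ S k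
      ∧ x * θ^k - (-1:K)^(k*(p+q)) • (E^k) x ∈ S k := by
    intro k
    induction k with
    | zero =>
      refine ⟨by simpa using hx, ?_, ?_⟩
      · simp
      · simp [Nat.zero_mul]
    | succ k ih =>
      obtain ⟨hy, hr, hs⟩ := ih
      obtain ⟨u, hu, z, hz, e, e'⟩ := cfe_step (ρL := ρL) (n := n) (bV := bV) (bW := bW) (L := L)
        (hL := hL) (hρL := hρL) (θ := θ) (hθ := hθ) (p+k) (q+k) hy
      have hEk : (E^(k+1)) x = u := by
        have h1 : (E^(k+1)) x = E ((E^k) x) := by rw [pow_succ', Module.End.mul_apply]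
        rw [h1, hE (p+k) (q+k) _ hy, e, e', smul_smul, ← pow_add,
          Even.neg_one_pow ⟨(p+k)+(q+k), rfl⟩, one_smul]
        have h2 : (u + z) + (u - z) = u + u := by abel
        rw [h2, ← two_smul K, smul_smul, inv_mul_cancel₀ (two_ne_zero : (2:K) ≠ 0), one_smul]
      refine ⟨hEk ▸ hu, ?_, ?_⟩
      · have h2 : θ^(k+1) * x = θ * (θ^k * x) := by rw [pow_succ', mul_assoc]
        have hrr := (hSmul k _ hr).1
        rw [mul_sub] at hrr
        have h3 : θ^(k+1) * x - (E^(k+1)) x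
            = (θ * (θ^k * x) - θ * ((E^k) x)) + z := by
          rw [h2, hEk, e]; abel
        rw [h3]
        exact add_mem hrr (Submodule.mem_iSup_of_mem ⟨p+k-1, by omega⟩ hz)
      · have h3 : x * θ^(k+1) = (x * θ^k) * θ := by rw [pow_succ, ← mul_assoc]
        have hss := (hSmul k _ hs).2
        rw [sub_mul, smul_mul_assoc] at hss
        have hsign : (-1:K)^(k*(p+q)) * (-1:K)^((p+k)+(q+k)) = (-1:K)^((k+1)*(p+q)) := by
          rw [← pow_add]
          have h4 : k*(p+q) + ((p+k)+(q+k)) = (k+1)*(p+q) + 2*k := by ring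
          rw [h4, pow_add, pow_mul]
          norm_num
        have key : x * θ^(k+1) - (-1:K)^((k+1)*(p+q)) • (E^(k+1)) x
            = ((x * θ^k) * θ - (-1:K)^(k*(p+q)) • ((E^k) x * θ))
              + (-1:K)^((k+1)*(p+q)) • (-z) := by
          rw [h3, hEk, e', smul_smul, hsign, smul_sub, smul_neg]
          abel
        rw [key]
        exact add_mem hss (Submodule.smul_mem _ _
          (Submodule.neg_mem _ (Submodule.mem_iSup_of_mem ⟨p+k-1, by omega⟩ hz)))
  obtain ⟨hy, hr, hs⟩ := main k
  have hsq : (-1:K)^(k*(p+q)) * (-1:K)^(k*(p+q)) = 1 := by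
    rw [← pow_add]; exact Even.neg_one_pow ⟨k*(p+q), rfl⟩
  constructor
  · have h1 : θ^k * x = (E^k) x + (θ^k * x - (E^k) x) := by abel
    rw [h1, map_add, hSPi k _ hr, add_zero,
      cfe_rTensor_comp ρL Pi hPi (p+k) (p+k) (q+k) hy, if_pos rfl]
  · have h1 : x * θ^k = (-1:K)^(k*(p+q)) • (E^k) x
        + (x * θ^k - (-1:K)^(k*(p+q)) • (E^k) x) := by abel
    rw [h1, map_add, hSPi k _ hs, add_zero, map_smul,
      cfe_rTensor_comp ρL Pi hPi (p+k) (p+k) (q+k) hy, if_pos rfl, smul_smul, hsq, one_smul]
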